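/- The power series M(z) = ∑_{n≥0} Catalan(n)*Catalan(n+1) z^n has radius of convergence 1/16, and its value at z = 1/16 is M(1/16) = 8 - 64/(3π). -/

import Mathlib

open Real

open Filter Finset
open scoped Nat Topology

private lemma cat_fact (n : ℕ) : ((n : ℝ) + 1) * catalan n * (n ! * n !) = (2 * n)! := by
  have h := Nat.choose_mul_factorial_mul_factorial (show n ≤ 2 * n by omega)
  have h2 : (n + 1) * catalan n * (n ! * n !) = (2 * n)! := by
    rw [succ_mul_catalan_eq_centralBinom, Nat.centralBinom]
    calc (2 * n).choose n * (n ! * n !) = (2 * n).choose n * n ! * (2 * n - n)! := by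
          rw [show 2 * n - n = n by omega]; ring
      _ = (2 * n)! := h
  exact_mod_cast h2

private lemma cat_rec (n : ℕ) : ((n : ℝ) + 2) * catalan (n + 1) = 2 * (2 * n + 1) * catalan n := by
  have e1 : ((n : ℝ) + 1) * (n + 1).centralBinom = 2 * (2 * n + 1) * n.centralBinom := by
    exact_mod_cast Nat.succ_mul_centralBinom_succ n
  have e2 : ((n : ℝ) + 1) * catalan n = n.centralBinom := by
    exact_mod_cast succ_mul_catalan_eq_centralBinom n
  have e3 : ((n : ℝ) + 2) * catalan (n + 1) = (n + 1).centralBinom := by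
    have := succ_mul_catalan_eq_centralBinom (n + 1)
    exact_mod_cast this
  have hne : ((n : ℝ) + 1) ≠ 0 := by positivity
  apply mul_left_cancel₀ hne
  linear_combination e1 - 2 * (2 * (n : ℝ) + 1) * e2 + ((n : ℝ) + 1) * e3

private lemma cat_le (n : ℕ) : (catalan n : ℝ) ≤ 4 ^ n := by
  have h1 : catalan n ≤ n.centralBinom :=
    (Nat.le_mul_of_pos_left _ n.succ_pos).trans_eq (succ_mul_catalan_eq_centralBinom n)
  have h2 : n.centralBinom ≤ 4 ^ n := by
    have : (2 * n).choose n ≤ ∑ i ∈ range (2 * n + 1), (2 * n).choose i :=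
      Finset.single_le_sum (fun i _ => Nat.zero_le _) (by simp; omega)
    rw [Nat.sum_range_choose] at this
    calc n.centralBinom = (2 * n).choose n := rfl
      _ ≤ 2 ^ (2 * n) := this
      _ = 4 ^ n := by rw [pow_mul]; norm_num
  exact_mod_cast h1.trans h2

private lemma cat_low (n : ℕ) : (4 : ℝ) ^ n ≤ (2 * n + 1) * ((n + 1) * catalan n) := by
  have h : 4 ^ n ≤ (2 * n + 1) * ((n + 1) * catalan n) := by
    rw [succ_mul_catalan_eq_centralBinom]
    exact Nat.four_pow_le_two_mul_add_one_mul_central_binom n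
  exact_mod_cast h

private lemma cat_nn (n : ℕ) : (0 : ℝ) ≤ catalan n := Nat.cast_nonneg _

private lemma psum (N : ℕ) : ∑ n ∈ range N, (catalan n * catalan (n + 1) : ℝ) * (1 / 16) ^ n
    = 8 - 4 / 3 * (N + 1) * (N + 2) * (4 * N + 3) * (catalan N * catalan (N + 1)) * (1 / 16) ^ N := by
  induction N with
  | zero => norm_num
  | succ N ih =>
    rw [sum_range_succ, ih]
    have R1 := cat_rec N
    have R2 := cat_rec (N + 1)
    push_cast at R1 R2 ⊢
    rw [pow_succ]
    set x := ((1 : ℝ) / 16) ^ N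
    set a := (catalan N : ℝ)
    set b := (catalan (N + 1) : ℝ)
    set d := (catalan (N + 2) : ℝ)
    linear_combination ((1/6) * (4*(N:ℝ)+7) * (2*(N:ℝ)+3) * b * x) * R1
      + ((1/12) * ((N:ℝ)+2) * (4*(N:ℝ)+7) * b * x) * R2

private lemma tail_eq (N : ℕ) : 4 / 3 * ((N : ℝ) + 1) * (N + 2) * (4 * N + 3)
      * (catalan N * catalan (N + 1)) * (1 / 16) ^ N
    = 8 / 3 * ((4 * N + 3) / (N + 1)) * (Real.Wallis.W N)⁻¹ := by
  have hW := Real.Wallis.W_eq_factorial_ratio N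
  have h1 := cat_fact N
  have h2 := cat_fact (N + 1)
  have f1 : ((2 * (N + 1))! : ℝ) = (2 * N + 2) * ((2 * N + 1) * (2 * N)!) := by
    have : 2 * (N + 1) = (2 * N + 1) + 1 := by ring
    rw [this, Nat.factorial_succ, Nat.factorial_succ]; push_cast; ring
  have f2 : ((N + 1)! : ℝ) = (N + 1) * N ! := by
    rw [Nat.factorial_succ]; push_cast; ring
  rw [f1] at h2
  push_cast [f2] at h2
  push_cast at h1
  have ha : (catalan N : ℝ) = (2 * N)! / (((N : ℝ) + 1) * (N ! * N !)) := by
    field_simp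
    linear_combination h1
  have hb : (catalan (N + 1) : ℝ)
      = (2 * N + 2) * ((2 * N + 1) * (2 * N)!) / ((((N : ℝ) + 2)) * (((N : ℝ) + 1) * N ! * ((N + 1) * N !))) := by
    rw [eq_div_iff (by positivity)]
    linear_combination h2
  rw [ha, hb, hW]
  have hfac : (0 : ℝ) < N ! := by exact_mod_cast N.factorial_pos
  have hfac2 : (0 : ℝ) < (2 * N)! := by exact_mod_cast (2 * N).factorial_pos
  have h16 : ((2 : ℝ)) ^ (4 * N) = 16 ^ N := by rw [pow_mul]; norm_num
  rw [h16]
  have h16p : (0 : ℝ) < (16 : ℝ) ^ N := by positivity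
  rw [one_div_pow]
  field_simp
  ring

private lemma tail_tendsto : Tendsto (fun N : ℕ => 4 / 3 * ((N : ℝ) + 1) * (N + 2) * (4 * N + 3)
      * (catalan N * catalan (N + 1)) * (1 / 16) ^ N) atTop (𝓝 (64 / (3 * π))) := by
  simp_rw [tail_eq]
  have h1 : Tendsto (fun N : ℕ => ((4 * N + 3 : ℝ)) / (N + 1)) atTop (𝓝 4) := by
    have he : ∀ N : ℕ, ((4 * N + 3 : ℝ)) / (N + 1) = 4 - 1 / (N + 1) := by
      intro N
      have : ((N : ℝ) + 1) ≠ 0 := by positivity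
      field_simp
      ring
    simp_rw [he]
    have : Tendsto (fun n : ℕ => 1 / ((n : ℝ) + 1)) atTop (𝓝 0) := tendsto_one_div_add_atTop_nhds_zero_nat
    simpa using tendsto_const_nhds.sub this
  have h2 : Tendsto (fun N : ℕ => (Real.Wallis.W N)⁻¹) atTop (𝓝 (π / 2)⁻¹) :=
    Real.Wallis.tendsto_W_nhds_pi_div_two.inv₀ (by positivity)
  have h3 := (h1.const_mul (8 / 3 : ℝ)).mul h2
  have : (8 : ℝ) / 3 * 4 * (π / 2)⁻¹ = 64 / (3 * π) := by
    rw [inv_div]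
    field_simp
    ring
  rw [this] at h3
  exact h3

theorem Mseries_radius_and_value :
    (∀ z : ℝ, |z| < 1 / 16 →
      Summable (fun n : ℕ => (catalan n * catalan (n + 1) : ℝ) * z ^ n)) ∧
    (∀ z : ℝ, 1 / 16 < |z| →
      ¬ Summable (fun n : ℕ => (catalan n * catalan (n + 1) : ℝ) * z ^ n)) ∧
    HasSum (fun n : ℕ => (catalan n * catalan (n + 1) : ℝ) * (1 / 16) ^ n)
      (8 - 64 / (3 * π)) := by
  refine ⟨?_, ?_, ?_⟩
  · intro z hz
    have hr : 16 * |z| < 1 := by linarith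
    have hr0 : (0 : ℝ) ≤ 16 * |z| := by positivity
    refine Summable.of_norm_bounded
      ((summable_geometric_of_lt_one hr0 hr).mul_left 4) (fun n => ?_)
    show ‖(catalan n * catalan (n + 1) : ℝ) * z ^ n‖ ≤ 4 * (16 * |z|) ^ n
    have h16 : ((16 : ℝ) * |z|) ^ n = 4 ^ n * 4 ^ n * |z| ^ n := by
      rw [show (16 : ℝ) * |z| = 4 * 4 * |z| by norm_num, mul_pow, mul_pow]
    rw [Real.norm_eq_abs, abs_mul, abs_mul, abs_pow, Nat.abs_cast, Nat.abs_cast, h16]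
    have h1 := cat_le n
    have h2 := cat_le (n + 1)
    have hzp : (0 : ℝ) ≤ |z| ^ n := by positivity
    have hmm : (catalan n : ℝ) * (catalan (n + 1) : ℝ) ≤ 4 ^ n * 4 ^ (n + 1) :=
      mul_le_mul h1 h2 (cat_nn _) (by positivity)
    calc (catalan n : ℝ) * (catalan (n + 1) : ℝ) * |z| ^ n
        ≤ 4 ^ n * 4 ^ (n + 1) * |z| ^ n := by nlinarith
      _ = 4 * (4 ^ n * 4 ^ n * |z| ^ n) := by ring
  · intro z hz hs
    set f := fun n : ℕ => (catalan n * catalan (n + 1) : ℝ) * z ^ n with hf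
    have hr : (1 : ℝ) < 16 * |z| := by linarith
    set r := 16 * |z| with hrdef
    have key : Tendsto (fun n : ℕ => ((2 * n + 3 : ℝ)) ^ 4 / r ^ n) atTop (𝓝 0) := by
      have h625 : Tendsto (fun n : ℕ => 625 * ((n : ℝ) ^ 4 / r ^ n)) atTop (𝓝 (625 * 0)) :=
        (tendsto_pow_const_div_const_pow_of_one_lt 4 hr).const_mul 625
      rw [mul_zero] at h625
      apply tendsto_of_tendsto_of_tendsto_of_le_of_le' tendsto_const_nhds h625
      · filter_upwards with n; positivity
      · filter_upwards [eventually_ge_atTop 1] with n hn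
        have h5 : (2 * (n : ℝ) + 3) ≤ 5 * n := by
          have : (1 : ℝ) ≤ n := by exact_mod_cast hn
          linarith
        have hp : (0 : ℝ) < r ^ n := by positivity
        rw [show 625 * ((n : ℝ) ^ 4 / r ^ n) = 625 * (n : ℝ) ^ 4 / r ^ n from by ring]
        have h54 : (2 * (n : ℝ) + 3) ^ 4 ≤ (5 * n) ^ 4 :=
          pow_le_pow_left₀ (by positivity) h5 4
        rw [div_le_div_iff_of_pos_right hp]
        nlinarith [h54]
    have hsmall := key.eventually_lt_const (by norm_num : (0 : ℝ) < 4)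
    have hzero : Tendsto (fun n => |f n|) atTop (𝓝 0) := by
      have h0 := hs.tendsto_atTop_zero
      simpa using h0.abs
    have hlt1 := hzero.eventually_lt_const (by norm_num : (0 : ℝ) < 1)
    obtain ⟨n, h4, hf1⟩ := (hsmall.and hlt1).exists
    have l1 := cat_low n
    have l2 := cat_low (n + 1)
    push_cast at l1 l2
    have hp : (0 : ℝ) < r ^ n := by positivity
    have h4' : (2 * (n : ℝ) + 3) ^ 4 < 4 * r ^ n := by
      rw [div_lt_iff₀ hp] at h4; linarith
    have habs : |f n| = (catalan n : ℝ) * catalan (n + 1) * |z| ^ n := by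
      rw [hf, abs_mul, abs_mul, abs_pow, Nat.abs_cast, Nat.abs_cast]
    have hrn : r ^ n = 4 ^ n * (4 ^ n * |z| ^ n) := by
      rw [hrdef, show (16 : ℝ) * |z| = 4 * 4 * |z| from by norm_num, mul_pow, mul_pow]; ring
    have hz4 : (0 : ℝ) ≤ |z| ^ n := by positivity
    have e1 : (0 : ℝ) ≤ (2 * (n : ℝ) + 1) * (((n : ℝ) + 1) * catalan n) :=
      le_trans (by positivity) l1
    have hprod := mul_le_mul_of_nonneg_right (mul_le_mul l1 l2 (by positivity) e1) hz4
    set D : ℝ := (2 * (n : ℝ) + 1) * ((n : ℝ) + 1) * ((2 * ((n : ℝ) + 1) + 1) * ((n : ℝ) + 1 + 1)) with hD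
    have hlow : 4 * r ^ n ≤ |f n| * D := by
      rw [habs]
      calc 4 * r ^ n = 4 ^ n * 4 ^ (n + 1) * |z| ^ n := by rw [hrn]; ring
        _ ≤ (2 * (n : ℝ) + 1) * (((n : ℝ) + 1) * catalan n)
              * ((2 * ((n : ℝ) + 1) + 1) * (((n : ℝ) + 1 + 1) * catalan (n + 1))) * |z| ^ n := hprod
        _ = (catalan n : ℝ) * catalan (n + 1) * |z| ^ n * D := by rw [hD]; ring
    have hDle : D ≤ (2 * (n : ℝ) + 3) ^ 4 := by
      rw [hD]
      have hn0 : (0 : ℝ) ≤ n := Nat.cast_nonneg n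
      nlinarith [hn0, pow_nonneg hn0 2, pow_nonneg hn0 3, pow_nonneg hn0 4]
    have hDpos : (0 : ℝ) < D := by rw [hD]; positivity
    have hfn : |f n| ≥ 0 := abs_nonneg _
    have hmul : 0 < (1 - |f n|) * D := mul_pos (by linarith) hDpos
    nlinarith [hlow, hDle, h4', hmul]
  · have nonneg : ∀ n : ℕ, 0 ≤ (catalan n * catalan (n + 1) : ℝ) * (1 / 16) ^ n := by
      intro n
      have := cat_nn n; have := cat_nn (n + 1)
      positivity
    have bdd : ∀ N : ℕ, ∑ n ∈ range N, (catalan n * catalan (n + 1) : ℝ) * (1 / 16) ^ n ≤ 8 := by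
      intro N
      rw [psum]
      have h1 : (0 : ℝ) ≤ 4 / 3 * (N + 1) * (N + 2) * (4 * N + 3)
          * (catalan N * catalan (N + 1)) * (1 / 16) ^ N := by
        have := cat_nn N; have := cat_nn (N + 1)
        positivity
      linarith
    have hsum : Summable (fun n : ℕ => (catalan n * catalan (n + 1) : ℝ) * (1 / 16) ^ n) :=
      summable_of_sum_range_le nonneg bdd
    have ht : Tendsto (fun N : ℕ => ∑ n ∈ range N, (catalan n * catalan (n + 1) : ℝ) * (1 / 16) ^ n)
        atTop (𝓝 (8 - 64 / (3 * π))) := by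
      simp_rw [psum]
      exact tendsto_const_nhds.sub tail_tendsto
    have h2 := hsum.hasSum.tendsto_sum_nat
    have := tendsto_nhds_unique h2 ht
    exact this ▸ hsum.hasSum
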